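/- Let p_data, p_pre be probability densities, α > 0, r : ℝ^d → [0,∞) measurable with E_{p_pre}[exp(2r(Y)/α)] < ∞, and p_ftune(y) := exp(r(y)/α) p_pre(y)/C with C the normalizing constant. Then D_TV(p_ftune, p_data) ≤ D_TV(p_pre, p_data) + (1/2)·sqrt(E_{p_pre}[exp(2r(Y)/α)]). -/
import Mathlib


open MeasureTheory Real

noncomputable def klDivD {d : ℕ} (p q : EuclideanSpace ℝ (Fin d) → ℝ) : ℝ :=
  ∫ y, p y * Real.log (p y / q y)

def IsProbDensity {d : ℕ} (p : EuclideanSpace ℝ (Fin d) → ℝ) : Prop :=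
  Measurable p ∧ (∀ y, 0 ≤ p y) ∧ (∫ y, p y) = 1

noncomputable def tvDist {d : ℕ} (p q : EuclideanSpace ℝ (Fin d) → ℝ) : ℝ :=
  ⨆ A : {s : Set (EuclideanSpace ℝ (Fin d)) // MeasurableSet s},
    |(∫ y in A.1, p y) - ∫ y in A.1, q y|

set_option maxHeartbeats 1000000 in
/-- Proposition 3.2: total-variation bound for the fine-tuned density. -/
theorem stmt_5 {d : ℕ} (pdata ppre r : EuclideanSpace ℝ (Fin d) → ℝ) (α : ℝ) (hα : 0 < α)
    (hdata : IsProbDensity pdata) (hpre : IsProbDensity ppre)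
    (hr : Measurable r) (hrpos : ∀ y, 0 ≤ r y)
    (h2 : Integrable (fun y => Real.exp (2 * r y / α) * ppre y)) :
    tvDist (fun y => Real.exp (r y / α) * ppre y / ∫ z, Real.exp (r z / α) * ppre z) pdata ≤
      tvDist ppre pdata +
        (1 / 2) * Real.sqrt (∫ y, Real.exp (2 * r y / α) * ppre y) := by
  classical
  obtain ⟨hpm, hpnn, hpint1⟩ := hpre
  obtain ⟨hdm, hdnn, hdint1⟩ := hdata
  have hppre_int : Integrable ppre := by
    by_contra h
    rw [integral_undef h] at hpint1; norm_num at hpint1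
  have hpdata_int : Integrable pdata := by
    by_contra h
    rw [integral_undef h] at hdint1; norm_num at hdint1
  have hf1 : ∀ y, 1 ≤ Real.exp (r y / α) := fun y =>
    Real.one_le_exp (div_nonneg (hrpos y) hα.le)
  have hg1 : ∀ y, 1 ≤ Real.exp (2 * r y / α) := fun y =>
    Real.one_le_exp (div_nonneg (mul_nonneg (by norm_num) (hrpos y)) hα.le)
  have hfsq : ∀ y, Real.exp (r y / α) ^ 2 = Real.exp (2 * r y / α) := by
    intro y; rw [sq, ← Real.exp_add]; ring_nf
  have hfm : Measurable fun y => Real.exp (r y / α) * ppre y :=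
    ((hr.div_const α).exp).mul hpm
  -- integrability of exp(r/α) * ppre
  have hfp_int : Integrable fun y => Real.exp (r y / α) * ppre y := by
    refine h2.mono hfm.aestronglyMeasurable (Filter.Eventually.of_forall fun y => ?_)
    have h1 := hf1 y
    have h0 := hpnn y
    have h2' := hg1 y
    rw [Real.norm_eq_abs, Real.norm_eq_abs, abs_of_nonneg (by positivity),
      abs_of_nonneg (by positivity), ← hfsq y]
    nlinarith [mul_nonneg (mul_nonneg (by linarith : (0:ℝ) ≤ Real.exp (r y / α))
      (by linarith : (0:ℝ) ≤ Real.exp (r y / α) - 1)) h0]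
  set C : ℝ := ∫ z, Real.exp (r z / α) * ppre z with hCdef
  set E : ℝ := ∫ y, Real.exp (2 * r y / α) * ppre y with hEdef
  have h1C : 1 ≤ C := by
    rw [hCdef, ← hpint1]
    exact integral_mono hppre_int hfp_int fun y => by
      nlinarith [hf1 y, hpnn y]
  have h1E : 1 ≤ E := by
    rw [hEdef, ← hpint1]
    exact integral_mono hppre_int h2 fun y => by
      nlinarith [hg1 y, hpnn y]
  have hC0 : (0:ℝ) < C := by linarith
  -- C^2 ≤ E  via pointwise 2*C*f ≤ f^2 + C^2
  have hCE : C ^ 2 ≤ E := by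
    have key : ∀ y, 2 * C * (Real.exp (r y / α) * ppre y) ≤
        Real.exp (2 * r y / α) * ppre y + C ^ 2 * ppre y := by
      intro y
      have h0 := hpnn y
      have hsq := mul_nonneg (sq_nonneg (Real.exp (r y / α) - C)) h0
      nlinarith [hfsq y]
    have hint : ∫ y, 2 * C * (Real.exp (r y / α) * ppre y) ≤
        ∫ y, (Real.exp (2 * r y / α) * ppre y + C ^ 2 * ppre y) :=
      integral_mono (hfp_int.const_mul _) (h2.add (hppre_int.const_mul _)) key
    rw [integral_const_mul, integral_add h2 (hppre_int.const_mul _),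
      integral_const_mul, hpint1] at hint
    rw [← hCdef, ← hEdef] at hint
    nlinarith
  have hsE : C ≤ Real.sqrt E := (Real.le_sqrt hC0.le (by linarith)).2 hCE
  -- the fine-tuned density
  set pft : EuclideanSpace ℝ (Fin d) → ℝ :=
    fun y => Real.exp (r y / α) * ppre y / C with hpft
  have hpft_int : Integrable pft := hfp_int.div_const C
  have hpft1 : (∫ y, pft y) = 1 := by
    rw [hpft]
    simp only [integral_div, ← hCdef]
    exact div_self hC0.ne'
  -- pointwise bound |pft - ppre| ≤ exp(r/α) * ppre
  have habs : ∀ y, |pft y - ppre y| ≤ Real.exp (r y / α) * ppre y := by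
    intro y
    have h0 := hpnn y
    have h1 := hf1 y
    have hle : Real.exp (r y / α) * ppre y / C ≤ Real.exp (r y / α) * ppre y :=
      div_le_self (by positivity) h1C
    have hge : 0 ≤ Real.exp (r y / α) * ppre y / C :=
      div_nonneg (by positivity) hC0.le
    have hpe : ppre y ≤ Real.exp (r y / α) * ppre y := le_mul_of_one_le_left h0 h1
    simp only [hpft]
    rw [abs_sub_le_iff]
    constructor <;> linarith
  have hg_int : Integrable (fun y => pft y - ppre y) := hpft_int.sub hppre_int
  have hgzero : (∫ y, (pft y - ppre y)) = 0 := by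
    rw [integral_sub hpft_int hppre_int, hpft1, hpint1]; ring
  have hL1 : (∫ y, |pft y - ppre y|) ≤ C :=
    integral_mono hg_int.abs hfp_int habs
  -- for every measurable set A : |∫_A pft - ∫_A ppre| ≤ C/2
  have hsetbound : ∀ A : {s : Set (EuclideanSpace ℝ (Fin d)) // MeasurableSet s},
      |(∫ y in A.1, pft y) - ∫ y in A.1, ppre y| ≤ Real.sqrt E / 2 := by
    intro A
    have hsub : (∫ y in A.1, pft y) - ∫ y in A.1, ppre y
        = ∫ y in A.1, (pft y - ppre y) :=
      (integral_sub hpft_int.integrableOn hppre_int.integrableOn).symm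
    have hcompl := integral_add_compl A.2 hg_int
    rw [hgzero] at hcompl
    have habs1 : |∫ y in A.1, (pft y - ppre y)| ≤ ∫ y in A.1, |pft y - ppre y| := by
      simpa [Real.norm_eq_abs] using
        norm_integral_le_integral_norm (μ := volume.restrict A.1) (fun y => pft y - ppre y)
    have habs2 : |∫ y in A.1ᶜ, (pft y - ppre y)| ≤ ∫ y in A.1ᶜ, |pft y - ppre y| := by
      simpa [Real.norm_eq_abs] using
        norm_integral_le_integral_norm (μ := volume.restrict A.1ᶜ) (fun y => pft y - ppre y)
    have heq : |∫ y in A.1, (pft y - ppre y)| = |∫ y in A.1ᶜ, (pft y - ppre y)| := by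
      have : (∫ y in A.1, (pft y - ppre y)) = -(∫ y in A.1ᶜ, (pft y - ppre y)) := by
        linarith
      rw [this, abs_neg]
    have hsum := integral_add_compl A.2 hg_int.abs
    rw [hsub]
    linarith [habs1, habs2, heq.le, heq.ge, hsum, hL1, hsE,
      abs_nonneg (∫ y in A.1, (pft y - ppre y))]
  -- bounded above for tvDist ppre pdata
  have hbdd : BddAbove (Set.range fun A : {s : Set (EuclideanSpace ℝ (Fin d)) // MeasurableSet s} =>
      |(∫ y in A.1, ppre y) - ∫ y in A.1, pdata y|) := by
    refine ⟨2, ?_⟩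
    rintro x ⟨A, rfl⟩
    have h1 : (0:ℝ) ≤ ∫ y in A.1, ppre y := setIntegral_nonneg A.2 fun y _ => hpnn y
    have h2' : (∫ y in A.1, ppre y) ≤ 1 := by
      rw [← hpint1]
      exact setIntegral_le_integral hppre_int (Filter.Eventually.of_forall hpnn)
    have h3 : (0:ℝ) ≤ ∫ y in A.1, pdata y := setIntegral_nonneg A.2 fun y _ => hdnn y
    have h4 : (∫ y in A.1, pdata y) ≤ 1 := by
      rw [← hdint1]
      exact setIntegral_le_integral hpdata_int (Filter.Eventually.of_forall hdnn)
    rw [abs_sub_le_iff]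
    constructor <;> linarith
  haveI : Nonempty {s : Set (EuclideanSpace ℝ (Fin d)) // MeasurableSet s} :=
    ⟨⟨∅, MeasurableSet.empty⟩⟩
  rw [tvDist]
  refine ciSup_le fun A => ?_
  have htri := abs_sub_le (∫ y in A.1, pft y) (∫ y in A.1, ppre y) (∫ y in A.1, pdata y)
  have h1 := hsetbound A
  have h2' : |(∫ y in A.1, ppre y) - ∫ y in A.1, pdata y| ≤ tvDist ppre pdata :=
    le_ciSup hbdd A
  calc |(∫ y in A.1, pft y) - ∫ y in A.1, pdata y|
      ≤ Real.sqrt E / 2 + tvDist ppre pdata := by linarith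
    _ = tvDist ppre pdata + 1 / 2 * Real.sqrt E := by ring
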